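/- Let X(u) = X_i Π_{j=1}^{k-1} Exp(λ_j(u) d_j) be a cumulative B-spline of order k in a matrix Lie group. Define the recursion ω^{(1)} = 0 and ω^{(j)} = Ad_{A_{j-1}^{-1}} ω^{(j-1)} + λ̇_{j-1} d_{j-1}, where A_j = Exp(λ_j d_j). Then the time derivative satisfies Ẋ(u) = X(u) · (ω^{(k)})_∧. -/

import Mathlib

open NormedSpace

attribute [local instance] Matrix.linftyOpNormedRing Matrix.linftyOpNormedAlgebra

/-- For the cumulative B-spline
`X(u) = X_i · Π_{j=1}^{k-1} Exp(λ_j(u) d_j)` in a matrix Lie group, with the velocity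
recursion `ω^{(1)} = 0`, `ω^{(j)} = Ad_{A_{j-1}⁻¹} ω^{(j-1)} + λ̇_{j-1} d_{j-1}`
(expressed through the hat map: `hat(Ad_{A⁻¹} w) = A⁻¹ hat(w) A`), the time derivative
satisfies `Ẋ(u) = X(u) · (ω^{(k)})_∧`. -/
theorem cumulative_spline_first_deriv {n p : ℕ} (k : ℕ) (hk : 1 ≤ k)
    (hat : (Fin p → ℝ) →ₗ[ℝ] Matrix (Fin n) (Fin n) ℝ)
    (Xi : Matrix (Fin n) (Fin n) ℝ)
    (lam : ℕ → ℝ → ℝ) (d : ℕ → Fin p → ℝ)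
    (hlam : ∀ j, Differentiable ℝ (lam j))
    (A : ℕ → ℝ → Matrix (Fin n) (Fin n) ℝ)
    (hA : ∀ j u, A j u = exp (lam j u • hat (d j)))
    (X : ℝ → Matrix (Fin n) (Fin n) ℝ)
    (hX : ∀ u, X u = Xi * ((List.range (k - 1)).map (fun j => A (j + 1) u)).prod)
    (ω : ℕ → ℝ → Fin p → ℝ)
    (hω1 : ∀ u, ω 1 u = 0)
    (hωrec : ∀ j u, 2 ≤ j → j ≤ k →
      hat (ω j u) = (A (j - 1) u)⁻¹ * hat (ω (j - 1) u) * A (j - 1) u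
        + deriv (lam (j - 1)) u • hat (d (j - 1)))
    (u : ℝ) :
    HasDerivAt X (X u * hat (ω k u)) u := by
  -- derivative of each factor
  have hAderiv : ∀ j, HasDerivAt (A j) (A j u * (deriv (lam j) u • hat (d j))) u := by
    intro j
    have hfun : A j = fun v => exp (lam j v • hat (d j)) := funext (hA j)
    rw [hfun]
    have h1 := hasDerivAt_exp_smul_const (𝕂 := ℝ) (hat (d j)) (lam j u)
    have h2 := HasDerivAt.scomp u h1 ((hlam j u).hasDerivAt)
    have : deriv (lam j) u • (exp (lam j u • hat (d j)) * hat (d j))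
        = exp (lam j u • hat (d j)) * (deriv (lam j) u • hat (d j)) := by
      rw [mul_smul_comm]
    erw [this] at h2
    exact h2
  -- invertibility
  have hAinv : ∀ j, A j u * (A j u)⁻¹ = 1 := by
    intro j
    have hneg : (A j u)⁻¹ = exp (-(lam j u • hat (d j))) := by
      rw [hA, Matrix.exp_neg]
    rw [hneg, hA]
    erw [← exp_add_of_commute (Commute.neg_right (Commute.refl _))]
    simp [exp_zero]
  -- induction on number of factors
  have key : ∀ m, m + 1 ≤ k →
      HasDerivAt (fun v => ((List.range m).map (fun j => A (j + 1) v)).prod)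
        (((List.range m).map (fun j => A (j + 1) u)).prod * hat (ω (m + 1) u)) u := by
    intro m
    induction m with
    | zero =>
      intro _
      simp only [List.range_zero, List.map_nil, List.prod_nil, hω1, map_zero, mul_zero]
      exact hasDerivAt_const u 1
    | succ m ih =>
      intro hm
      have ih' := ih (le_trans (Nat.le_succ _) hm)
      simp only [List.range_succ, List.map_append, List.prod_append, List.map_cons,
        List.map_nil, List.prod_cons, List.prod_nil, mul_one]
      have hmul := ih'.mul (hAderiv (m + 1))
      convert hmul using 1
      · rfl
      · rfl
      · rfl
      · rfl
      have hrec : hat (ω (m + 2) u) = (A (m + 1) u)⁻¹ * hat (ω (m + 1) u) * A (m + 1) u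
          + deriv (lam (m + 1)) u • hat (d (m + 1)) := hωrec (m + 2) u (by omega) (by omega)
      have : m + 1 + 1 = m + 2 := rfl
      rw [this, hrec]
      set P := ((List.range m).map (fun j => A (j + 1) u)).prod
      rw [mul_add]
      congr 1
      · rw [← mul_assoc, ← mul_assoc, mul_assoc P (A (m+1) u), hAinv, mul_one]
      · rw [mul_assoc]
  have hkey := key (k - 1) (by omega)
  have hfun : X = fun v => Xi * ((List.range (k - 1)).map (fun j => A (j + 1) v)).prod :=
    funext hX
  rw [hfun]
  have := hkey.const_mul Xi
  convert this using 1
  · rfl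
  · rfl
  · rfl
  simp only [Nat.sub_add_cancel hk]
  rw [mul_assoc]
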